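/- arXiv:2104.00176 — 3 statements merged into one kernel-verified Lean document; each statement's English description precedes it below -/
import Mathlib

section
/- In the belief MDP H, reachable states have consistent beliefs: every state (s, B) reachable from the initial state (s₀, {s₀}) via transitions of the form (s, B) → (s', Post(B, a) ∩ o) with s' ∈ Post(s, a), s' ∈ o, satisfies s ∈ B. -/
/-- In the belief MDP, every state `(s, B)` reachable from `(s₀, {s₀})` via
belief-update transitions satisfies `s ∈ B` (belief consistency). -/
theorem belief_mdp_consistent {S A : Type*} (Post : S → A → Set S) (s₀ : S)
    (s : S) (B : Set S)
    (h : Relation.ReflTransGen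
      (fun p q : S × Set S => ∃ (a : A) (o : Set S),
        q.1 ∈ Post p.1 a ∧ q.1 ∈ o ∧ q.2 = (⋃ t ∈ p.2, Post t a) ∩ o)
      (s₀, {s₀}) (s, B)) :
    s ∈ B := by
  have key : ∀ p : S × Set S, Relation.ReflTransGen
      (fun p q : S × Set S => ∃ (a : A) (o : Set S),
        q.1 ∈ Post p.1 a ∧ q.1 ∈ o ∧ q.2 = (⋃ t ∈ p.2, Post t a) ∩ o)
      (s₀, {s₀}) p → p.1 ∈ p.2 := by
    intro p hp
    induction hp with
    | refl => exact rfl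
    | tail _ hstep ih =>
      obtain ⟨a, o, h1, h2, h3⟩ := hstep
      rw [h3]
      exact ⟨Set.mem_biUnion ih h1, h2⟩
  exact key (s, B) h
end

section
/- Completeness direction (safety invariance): let Win = Q \ ⋃_i L_i be the output of the elimination algorithm with final allowed-action map π. Then for every q ∈ Win, π(q) ≠ ∅, and for every action a ∈ π(q), Post(q, a) ⊆ Win ∪ {q_F}; i.e., Win ∪ {q_F} is closed under the allowed actions. -/
/-- The eliminated states `⋃ k, L k` of the action-elimination algorithm,
as a fixpoint (witnesses given functionally for kernel acceptability). -/
inductive Eliminated {Q A : Type*} (Post : Q → A → Set Q) (enabled : Q → Set A)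
    (equiv : Q → Q → Prop) (L0 : Set Q) : Q → Prop
  | base (q : Q) : q ∈ L0 → Eliminated Post enabled equiv L0 q
  | step (q : Q) (p u : A → Q) :
      (∀ a ∈ enabled q, equiv (p a) q ∧ u a ∈ Post (p a) a) →
      (∀ a ∈ enabled q, Eliminated Post enabled equiv L0 (u a)) →
      Eliminated Post enabled equiv L0 q

/-- Completeness direction (safety invariance): on the output winning region
`Win = Q \ ⋃ᵢ Lᵢ`, the final allowed-action map `π` (enabled actions never
removed, i.e. whose successors from every `∼`-equivalent state avoid the
eliminated set) is nonempty, and every allowed action keeps the play in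
`Win ∪ {q_F}`. -/
theorem elimination_safety {Q A : Type*} [Finite Q] [Finite A]
    (Post : Q → A → Set Q) (enabled : Q → Set A)
    (equiv : Q → Q → Prop) (hequiv : Equivalence equiv) (qF : Q)
    (hsink : ∀ a, Post qF a ⊆ {qF})
    (L0 : Set Q)
    (hL0 : L0 = {q | ¬ Relation.ReflTransGen
        (fun x y => ∃ a ∈ enabled x, y ∈ Post x a) q qF})
    (Win : Set Q) (hWin : Win = {q | ¬ Eliminated Post enabled equiv L0 q})
    (π : Q → Set A)
    (hπ : ∀ q, π q = {a ∈ enabled q | ∀ p, equiv p q →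
        ∀ u ∈ Post p a, ¬ Eliminated Post enabled equiv L0 u}) :
    ∀ q ∈ Win, (π q).Nonempty ∧ ∀ a ∈ π q, Post q a ⊆ Win ∪ {qF} := by
  intro q hq
  rw [hWin] at hq
  simp only [Set.mem_setOf_eq] at hq
  constructor
  · by_contra h
    rw [Set.not_nonempty_iff_eq_empty] at h
    apply hq
    have key : ∀ a ∈ enabled q, ∃ p, equiv p q ∧ ∃ u, u ∈ Post p a ∧
        Eliminated Post enabled equiv L0 u := by
      intro a ha
      have hnot : a ∉ π q := by rw [h]; exact Set.notMem_empty a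
      rw [hπ] at hnot
      simp only [Set.mem_setOf_eq, not_and, not_forall, not_not] at hnot
      obtain ⟨p, hp, u, hu, he⟩ := hnot ha
      exact ⟨p, hp, u, hu, he⟩
    classical
    have key' : ∀ a, ∃ p u, a ∈ enabled q → equiv p q ∧ u ∈ Post p a ∧
        Eliminated Post enabled equiv L0 u := by
      intro a
      by_cases ha : a ∈ enabled q
      · obtain ⟨p, hp, u, hu, he⟩ := key a ha
        exact ⟨p, u, fun _ => ⟨hp, hu, he⟩⟩
      · exact ⟨q, q, fun h => absurd h ha⟩
    choose p u hpu using key'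
    exact Eliminated.step q p u (fun a ha => ⟨(hpu a ha).1, (hpu a ha).2.1⟩)
      (fun a ha => (hpu a ha).2.2)
  · intro a ha x hx
    rw [hπ] at ha
    left
    rw [hWin]
    exact ha.2 q (hequiv.refl q) x hx
end

section
/- Existence of a deceptive almost-sure winning state for the attacker: in the 4-state example game there is a state that lies in P1's computed almost-sure winning region yet is almost-sure winning for P2. Concretely: in the belief-MDP over states {(s₀,{s₀}), (s₀,{s₀,s₁}), (s₁,{s₀,s₁}), (s₁,{s₁}), q_F}, with P1's strategy choosing (a₀,σ₀) at all non-final states except (s₁,{s₁}) where (a₁,·) reaches q_F, the attacker's memoryless strategy of always playing β₀ (jamming sensor 0) confines the play forever to the set {(s₀,{s₀}), (s₀,{s₀,s₁}), (s₁,{s₀,s₁})}; i.e., this set is closed under all transitions enabled by P1's strategy combined with attack β₀, and q_F is never reached. -/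
namespace AttackExample

/-- States `s₀, s₁, s₂, s₃` as `Fin 4`; `s₂` is the final state. -/
abbrev S := Fin 4
/-- Sensors `0, 1, 2` as `Fin 3`. -/
abbrev Sensor := Fin 3
/-- Actions `a₀, a₁` as `Fin 2`. -/
abbrev Act := Fin 2

/-- Sensor coverage: γ(0) = {s₁}, γ(1) = {s₀, s₁}, γ(2) = {s₂, s₃}. -/
def γ : Sensor → Set S := ![{1}, {0, 1}, {2, 3}]

/-- Transitions: Post(s₀,a₀) = {s₀,s₁}, Post(s₁,a₀) = {s₀},
Post(s₀,a₁) = {s₃}, Post(s₁,a₁) = {s₂}; no transitions elsewhere. -/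
def Post : S → Act → Set S
  | 0, 0 => {0, 1}
  | 1, 0 => {0}
  | 0, 1 => {3}
  | 1, 1 => {2}
  | _, _ => ∅

/-- Observation: states agreeing with `s` on every unattacked queried sensor. -/
def Obs (s : S) (σ β : Set Sensor) : Set S :=
  {t | ∀ i ∈ σ \ β, (s ∈ γ i ↔ t ∈ γ i)}

/-- P1's query σ₀ = {0, 1}. -/
def σ₀ : Set Sensor := {0, 1}

/-- P2's attack β₀ jamming sensor 0. -/
def β₀ : Set Sensor := {0}

/-- The set {(s₀,{s₀}), (s₀,{s₀,s₁}), (s₁,{s₀,s₁})} of belief-MDP states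
(all in P1's computed almost-sure winning region). -/
def K : Set (S × Set S) :=
  {(0, {0}), (0, ({0, 1} : Set S)), (1, ({0, 1} : Set S))}

lemma obs_mem (s t : S) : t ∈ Obs s σ₀ β₀ ↔ (s ∈ γ 1 ↔ t ∈ γ 1) := by
  constructor
  · intro h
    exact h 1 ⟨by simp [σ₀], by simp [β₀]⟩
  · intro h i hi
    have : i = 1 := by
      rcases hi with ⟨h0, h1⟩
      simp [σ₀] at h0
      simp [β₀] at h1
      tauto
    subst this; exact h

lemma inter_obs (s : S) (hs : s = 0 ∨ s = 1) :
    ({0, 1} : Set S) ∩ Obs s σ₀ β₀ = {0, 1} := by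
  ext x
  simp only [Set.mem_inter_iff, obs_mem]
  constructor
  · exact fun h => h.1
  · intro hx
    refine ⟨hx, ?_⟩
    rcases hs with rfl | rfl <;> rcases hx with rfl | rfl <;> simp [γ]

lemma U1 : (⋃ t ∈ ({0} : Set S), Post t 0) = {0, 1} := by
  simp [Post]

lemma U2 : (⋃ t ∈ ({0, 1} : Set S), Post t 0) = {0, 1} := by
  ext x
  simp [Post]

/-- Existence of a deceptive almost-sure winning state for the attacker:
with P1 playing `(a₀, σ₀)` at the states of `K` and P2 always jamming sensor 0
(attack `β₀`), the play is confined to `K` forever: `K` is closed under all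
resulting belief transitions, and the target is never reached — no state of
`K` has true state `s₂` and `K` excludes `(s₁, {s₁})`, the only state where
P1 would play `a₁` to reach `q_F`. -/
theorem attacker_deceptive_win :
    (∀ q ∈ K, ∀ q' : S × Set S,
      (q'.1 ∈ Post q.1 0 ∧ q'.2 = (⋃ t ∈ q.2, Post t 0) ∩ Obs q'.1 σ₀ β₀) →
        q' ∈ K)
    ∧ (∀ q ∈ K, q.1 ≠ 2 ∧ q ≠ (1, ({1} : Set S))) := by
  constructor
  · rintro q hq ⟨a, B⟩ ⟨h1, h2⟩
    simp only at h1 h2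
    have key : ∀ (s : S), s = 0 ∨ s = 1 → a ∈ Post s 0 →
        B = (⋃ t ∈ ({0} : Set S), Post t 0) ∩ Obs a σ₀ β₀ ∨
        B = (⋃ t ∈ ({0, 1} : Set S), Post t 0) ∩ Obs a σ₀ β₀ → (a, B) ∈ K := by
      intro s hs ha hB
      have ha' : a = 0 ∨ a = 1 := by
        rcases hs with rfl | rfl
        · simpa [Post] using ha
        · left; simpa [Post] using ha
      have hB' : B = {0, 1} := by
        rcases hB with rfl | rfl
        · rw [U1, inter_obs a ha']
        · rw [U2, inter_obs a ha']
      subst hB'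
      rcases ha' with rfl | rfl
      · right; left; rfl
      · right; right; rfl
    rcases hq with rfl | rfl | rfl
    · exact key 0 (Or.inl rfl) h1 (Or.inl h2)
    · exact key 0 (Or.inl rfl) h1 (Or.inr h2)
    · exact key 1 (Or.inr rfl) h1 (Or.inr h2)
  · rintro q (rfl | rfl | rfl)
    · exact ⟨by decide, by simp⟩
    · exact ⟨by decide, by simp⟩
    · refine ⟨by decide, ?_⟩
      intro h
      have h2 := congrArg Prod.snd h
      simp only at h2
      have h0 : (0 : S) ∈ ({1} : Set S) := h2 ▸ Set.mem_insert 0 {1}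
      simp at h0

end AttackExample
end
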